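/- Fix k = 2 and β > 0. Let P_0 be the law of an n×n GOE matrix Z, and P_β the law of X = β v v^T + Z with v uniform on S^{n−1} independent of Z. Then liminf_{n→∞} ‖P_0 − P_β‖_TV ≥ 1 − 2Φ(−β/(2√2)) > 0, where Φ(x) = ∫_{−∞}^x e^{−z²/2} dz/√(2π) is the standard Gaussian distribution function. (This follows because the trace statistic S = tr(X) is distributed as N(0,2) under P_0 and as N(β,2) under P_β.) -/

import Mathlib

open MeasureTheory ProbabilityTheory Filter
open scoped ENNReal

noncomputable section

instance matrixMeasurableSpace {m n α : Type*} [MeasurableSpace α] :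
    MeasurableSpace (Matrix m n α) :=
  inferInstanceAs (MeasurableSpace (m → n → α))

/-- Product of i.i.d. standard Gaussians indexed by `ι`. -/
def stdGaussianPi (ι : Type*) [Fintype ι] : Measure (ι → ℝ) :=
  Measure.pi fun _ => gaussianReal 0 1

/-- GOE matrix law: `Z = (G + Gᵀ)/√(2n)` with `G` having i.i.d. `N(0,1)` entries; it is a
symmetric random matrix with independent upper-triangular entries `Z_ij ~ N(0,1/n)` for `i<j`
and `Z_ii ~ N(0,2/n)`. -/
def goe (n : ℕ) : Measure (Matrix (Fin n) (Fin n) ℝ) :=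
  (stdGaussianPi (Fin n × Fin n)).map
    fun g => Matrix.of fun i j => (g (i, j) + g (j, i)) / Real.sqrt (2 * n)

/-- The uniform (rotation-invariant) probability measure on the unit sphere `S^{n-1} ⊆ ℝⁿ`,
realized as the law of a normalized standard Gaussian vector. -/
def sphereUniform (n : ℕ) : Measure (EuclideanSpace ℝ (Fin n)) :=
  ((stdGaussianPi (Fin n)).map
      fun x => ((EuclideanSpace.equiv (Fin n) ℝ).symm x : EuclideanSpace ℝ (Fin n))).map
    fun v => ‖v‖⁻¹ • v

/-- Law of `β v vᵀ + Z` with `v` uniform on the unit sphere and `Z` an independent GOE matrix. -/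
def spikedGOE (n : ℕ) (β : ℝ) : Measure (Matrix (Fin n) (Fin n) ℝ) :=
  ((sphereUniform n).prod (goe n)).map
    fun p => Matrix.of fun i j => β * (p.1 i * p.1 j) + (p.2 : Matrix (Fin n) (Fin n) ℝ) i j

/-- Total variation distance `‖P − Q‖_TV = sup_A |P(A) − Q(A)|` over measurable sets `A`. -/
def tvDist {Ω : Type*} [MeasurableSpace Ω] (P Q : Measure Ω) : ℝ :=
  ⨆ s : {s : Set Ω // MeasurableSet s}, |(P s).toReal - (Q s).toReal|

open Real
open scoped NNReal


lemma gauss_conv_pdf (m1 m2 : ℝ) (v1 v2 : ℝ≥0) (hv1 : v1 ≠ 0) (hv2 : v2 ≠ 0) (y : ℝ) :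
    ∫ x, gaussianPDFReal m1 v1 x * gaussianPDFReal m2 v2 (y - x)
      = gaussianPDFReal (m1 + m2) (v1 + v2) y := by
  set a : ℝ := (v1 : ℝ) with ha_def
  set b : ℝ := (v2 : ℝ) with hb_def
  have ha : 0 < a := lt_of_le_of_ne v1.coe_nonneg (by simpa [ha_def, eq_comm] using hv1)
  have hb : 0 < b := lt_of_le_of_ne v2.coe_nonneg (by simpa [hb_def, eq_comm] using hv2)
  have hab : 0 < a + b := by linarith
  set k : ℝ := (a + b) / (2 * a * b) with hk_def
  have hk : 0 < k := by positivity
  set x₀ : ℝ := (b * m1 + a * (y - m2)) / (a + b) with hx0_def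
  have key : ∀ x : ℝ,
      gaussianPDFReal m1 v1 x * gaussianPDFReal m2 v2 (y - x)
        = ((√(2 * π * a))⁻¹ * (√(2 * π * b))⁻¹ * rexp (-(y - (m1 + m2)) ^ 2 / (2 * (a + b))))
            * rexp (-k * (x - x₀) ^ 2) := by
    intro x
    simp only [gaussianPDFReal, ← ha_def, ← hb_def]
    have hE : -(x - m1) ^ 2 / (2 * a) + -(y - x - m2) ^ 2 / (2 * b)
        = -(y - (m1 + m2)) ^ 2 / (2 * (a + b)) + -k * (x - x₀) ^ 2 := by
      rw [hk_def, hx0_def]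
      field_simp
      ring
    rw [mul_mul_mul_comm, ← Real.exp_add, hE, Real.exp_add, ← mul_assoc]
  rw [integral_congr_ae (Filter.Eventually.of_forall key), integral_const_mul]
  have : ∫ x : ℝ, rexp (-k * (x - x₀) ^ 2) = √(π / k) := by
    rw [integral_sub_right_eq_self (fun x => rexp (-k * x ^ 2)) x₀, integral_gaussian]
  rw [this]
  have hconst : (√(2 * π * a))⁻¹ * (√(2 * π * b))⁻¹ * √(π / k) = (√(2 * π * (a + b)))⁻¹ := by
    rw [← Real.sqrt_inv, ← Real.sqrt_inv, ← Real.sqrt_inv, ← Real.sqrt_mul (by positivity),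
      ← Real.sqrt_mul (by positivity)]
    congr 1
    rw [hk_def]
    field_simp
  have hv12 : ((v1 + v2 : ℝ≥0) : ℝ) = a + b := by push_cast; rfl
  rw [gaussianPDFReal, hv12, ← hconst]
  ring


lemma gaussianPDFReal_le (m : ℝ) (v : ℝ≥0) (x : ℝ) :
    gaussianPDFReal m v x ≤ (√(2 * π * v))⁻¹ := by
  rw [gaussianPDFReal]
  have h1 : rexp (-(x - m) ^ 2 / (2 * v)) ≤ 1 := by
    rw [Real.exp_le_one_iff, neg_div]
    exact neg_nonpos.mpr (by positivity)
  calc (√(2 * π * v))⁻¹ * rexp (-(x - m) ^ 2 / (2 * v)) ≤ (√(2 * π * v))⁻¹ * 1 :=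
        mul_le_mul_of_nonneg_left h1 (by positivity)
    _ = _ := mul_one _

lemma integrable_conv_integrand (m1 m2 : ℝ) (v1 v2 : ℝ≥0) (y : ℝ) :
    Integrable (fun x => gaussianPDFReal m1 v1 x * gaussianPDFReal m2 v2 (y - x)) := by
  simp_rw [mul_comm (gaussianPDFReal m1 v1 _)]
  refine (integrable_gaussianPDFReal m1 v1).bdd_mul (c := (√(2 * π * v2))⁻¹) ?_ (Filter.Eventually.of_forall fun x => ?_)
  · exact ((measurable_gaussianPDFReal m2 v2).comp (measurable_const.sub measurable_id)
      ).aestronglyMeasurable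
  · rw [norm_eq_abs, abs_of_nonneg (gaussianPDFReal_nonneg _ _ _)]
    exact gaussianPDFReal_le _ _ _

lemma gaussianReal_conv (m1 m2 : ℝ) (v1 v2 : ℝ≥0) :
    ((gaussianReal m1 v1).prod (gaussianReal m2 v2)).map (fun p : ℝ × ℝ => p.1 + p.2)
      = gaussianReal (m1 + m2) (v1 + v2) := by
  by_cases hv1 : v1 = 0
  · subst hv1
    rw [gaussianReal_zero_var, Measure.dirac_prod, Measure.map_map measurable_add
      measurable_prodMk_left]
    have : ((fun p : ℝ × ℝ => p.1 + p.2) ∘ Prod.mk m1) = fun x => x + m1 := by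
      ext x; simp [add_comm]
    rw [this, gaussianReal_map_add_const, add_comm m2 m1, zero_add]
  by_cases hv2 : v2 = 0
  · subst hv2
    rw [gaussianReal_zero_var, Measure.prod_dirac, Measure.map_map measurable_add
      measurable_prodMk_right]
    have : ((fun p : ℝ × ℝ => p.1 + p.2) ∘ fun x => (x, m2)) = fun x => x + m2 := by
      ext x; simp
    rw [this, gaussianReal_map_add_const, add_zero]
  ext s hs
  rw [Measure.map_apply measurable_add hs, Measure.prod_apply (measurable_add hs)]
  have h1 : ∀ x : ℝ, gaussianReal m2 v2 (Prod.mk x ⁻¹' ((fun p : ℝ × ℝ => p.1 + p.2) ⁻¹' s))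
      = ∫⁻ y in s, ENNReal.ofReal (gaussianPDFReal m2 v2 (y - x)) := by
    intro x
    have hpre : Prod.mk x ⁻¹' ((fun p : ℝ × ℝ => p.1 + p.2) ⁻¹' s) = (fun y => x + y) ⁻¹' s := rfl
    rw [hpre, ← Measure.map_apply (measurable_const_add x) hs, gaussianReal_map_const_add,
      gaussianReal_apply _ (by simpa using hv2)]
    refine setLIntegral_congr_fun hs (fun y _ => ?_)
    rw [gaussianPDF, gaussianPDFReal_sub]
  simp_rw [h1]
  have hmeas2 : Measurable (fun x : ℝ => ∫⁻ y in s, ENNReal.ofReal (gaussianPDFReal m2 v2 (y - x))) := by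
    exact Measurable.lintegral_prod_right
      (((measurable_gaussianPDFReal m2 v2).comp (measurable_snd.sub measurable_fst)).ennreal_ofReal)
  rw [gaussianReal_of_var_ne_zero _ hv1,
    lintegral_withDensity_eq_lintegral_mul _ (measurable_gaussianPDF _ _) hmeas2]
  simp only [Pi.mul_apply, gaussianPDF]
  have h2 : ∀ x : ℝ, ENNReal.ofReal (gaussianPDFReal m1 v1 x)
        * ∫⁻ y in s, ENNReal.ofReal (gaussianPDFReal m2 v2 (y - x))
      = ∫⁻ y in s, ENNReal.ofReal (gaussianPDFReal m1 v1 x * gaussianPDFReal m2 v2 (y - x)) := by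
    intro x
    rw [← lintegral_const_mul' _ _ ENNReal.ofReal_ne_top]
    simp_rw [← ENNReal.ofReal_mul (gaussianPDFReal_nonneg m1 v1 x)]
  simp_rw [h2]
  rw [lintegral_lintegral_swap]
  · have h3 : ∀ y : ℝ, ∫⁻ x, ENNReal.ofReal (gaussianPDFReal m1 v1 x * gaussianPDFReal m2 v2 (y - x))
        = ENNReal.ofReal (gaussianPDFReal (m1 + m2) (v1 + v2) y) := by
      intro y
      rw [← ofReal_integral_eq_lintegral_ofReal (integrable_conv_integrand m1 m2 v1 v2 y)
        (Filter.Eventually.of_forall fun x => mul_nonneg (gaussianPDFReal_nonneg _ _ _)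
          (gaussianPDFReal_nonneg _ _ _)),
        gauss_conv_pdf m1 m2 v1 v2 hv1 hv2 y]
    simp_rw [h3]
    rw [gaussianReal_apply _ (fun h => hv1 (by simpa using (add_eq_zero.mp h).1)) s]
    rfl
  · exact (((measurable_gaussianPDFReal m1 v1).comp measurable_fst).mul
      ((measurable_gaussianPDFReal m2 v2).comp (measurable_snd.sub measurable_fst))
      ).ennreal_ofReal.aemeasurable


lemma measurable_wsum {ι : Type*} [Fintype ι] (c : ι → ℝ) :
    Measurable (fun x : ι → ℝ => ∑ i, c i * x i) :=
  Finset.measurable_sum _ fun i _ => (measurable_pi_apply i).const_mul _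

lemma stdGaussianPi_wsum_fin (n : ℕ) (c : Fin n → ℝ) :
    (Measure.pi fun _ : Fin n => gaussianReal 0 1).map (fun x => ∑ i, c i * x i)
      = gaussianReal 0 (∑ i, (⟨(c i) ^ 2, sq_nonneg _⟩ : ℝ≥0)) := by
  induction n with
  | zero =>
      have h : (fun x : Fin 0 → ℝ => ∑ i, c i * x i) = fun _ => (0 : ℝ) := by
        ext x; simp
      rw [h, Measure.map_const, measure_univ, one_smul]
      simp [gaussianReal_zero_var]
      convert (gaussianReal_zero_var 0).symm
      exact Finset.sum_empty
  | succ n ih =>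
      set T : ℝ × (Fin n → ℝ) → ℝ :=
        fun p => c 0 * p.1 + ∑ j, c j.succ * p.2 j with hT_def
      have hTmeas : Measurable T :=
        (measurable_fst.const_mul _).add
          (Finset.measurable_sum _ fun j _ =>
            ((measurable_pi_apply j).comp measurable_snd).const_mul _)
      have hmp := measurePreserving_piFinSuccAbove
        (fun _ : Fin (n + 1) => gaussianReal 0 1) 0
      have hcomp : (fun x : Fin (n + 1) → ℝ => ∑ i, c i * x i)
          = T ∘ (MeasurableEquiv.piFinSuccAbove (fun _ : Fin (n + 1) => ℝ) 0) := by
        ext x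
        simp [T, MeasurableEquiv.piFinSuccAbove_apply, Fin.sum_univ_succ, Fin.succAbove_zero, Fin.tail]
      rw [hcomp, ← Measure.map_map hTmeas (MeasurableEquiv.measurable _), hmp.map_eq]
      have hT2 : T = (fun p : ℝ × ℝ => p.1 + p.2)
          ∘ Prod.map (fun a => c 0 * a) (fun y : Fin n → ℝ => ∑ j, c j.succ * y j) := rfl
      rw [hT2, ← Measure.map_map measurable_add
          ((measurable_const_mul _).prodMap (measurable_wsum _)),
        ← Measure.map_prod_map _ _ (measurable_const_mul _) (measurable_wsum _),
        gaussianReal_map_const_mul, ih, gaussianReal_conv]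
      congr 1
      · ring
      · erw [Fin.sum_univ_succ]
        congr 1
        ext
        push_cast
        ring
        rfl



lemma stdGaussianPi_wsum {ι : Type*} [Fintype ι] (c : ι → ℝ) :
    (stdGaussianPi ι).map (fun x => ∑ i, c i * x i)
      = gaussianReal 0 (∑ i, (⟨(c i) ^ 2, sq_nonneg _⟩ : ℝ≥0)) := by
  classical
  set f : Fin (Fintype.card ι) ≃ ι := (Fintype.equivFin ι).symm
  have hmp := measurePreserving_piCongrLeft (fun _ : ι => gaussianReal 0 1) f
  have hmap : stdGaussianPi ι
      = (Measure.pi fun _ : Fin (Fintype.card ι) => gaussianReal 0 1).map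
          (MeasurableEquiv.piCongrLeft (fun _ : ι => ℝ) f) := hmp.map_eq.symm
  rw [hmap, Measure.map_map (Finset.measurable_sum _ fun i _ =>
      (measurable_pi_apply i).const_mul _) (MeasurableEquiv.measurable _)]
  have hcomp : ((fun x : ι → ℝ => ∑ i, c i * x i)
        ∘ (MeasurableEquiv.piCongrLeft (fun _ : ι => ℝ) f))
      = fun x : Fin (Fintype.card ι) → ℝ => ∑ j, c (f j) * x j := by
    ext x
    simp only [Function.comp_apply, MeasurableEquiv.coe_piCongrLeft]
    rw [← Equiv.sum_comp f (fun i => c i * Equiv.piCongrLeft (fun _ : ι => ℝ) f x i)]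
    refine Finset.sum_congr rfl fun j _ => ?_
    rw [Equiv.piCongrLeft_apply_apply]
  rw [hcomp, stdGaussianPi_wsum_fin]
  congr 1
  exact (Equiv.sum_comp f fun i => (⟨(c i) ^ 2, sq_nonneg _⟩ : ℝ≥0))







instance stdGaussianPi_prob (ι : Type*) [Fintype ι] : IsProbabilityMeasure (stdGaussianPi ι) :=
  inferInstanceAs (IsProbabilityMeasure (Measure.pi _))

lemma measurable_euclid_apply (n : ℕ) (i : Fin n) :
    Measurable fun v : EuclideanSpace ℝ (Fin n) => v i := (measurable_pi_apply i).comp (WithLp.measurable_ofLp 2 _)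

def trFn (n : ℕ) : Matrix (Fin n) (Fin n) ℝ → ℝ := fun M => ∑ i, M i i

lemma measurable_trFn (n : ℕ) : Measurable (trFn n) :=
  Finset.measurable_sum _ fun i _ =>
    (measurable_pi_apply i).comp (measurable_pi_apply i)

lemma measurable_goeFn (n : ℕ) : Measurable
    (fun g : Fin n × Fin n → ℝ => Matrix.of fun i j => (g (i, j) + g (j, i)) / Real.sqrt (2 * n)) := by
  refine measurable_pi_lambda _ fun i => measurable_pi_lambda _ fun j => ?_
  exact ((measurable_pi_apply (i, j)).add (measurable_pi_apply (j, i))).div_const _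

lemma goe_trace (n : ℕ) (hn : n ≠ 0) : (goe n).map (trFn n) = gaussianReal 0 2 := by
  have hs : Real.sqrt (2 * n) ≠ 0 := by
    refine Real.sqrt_ne_zero'.mpr ?_
    have : (1:ℝ) ≤ (n:ℝ) := by exact_mod_cast Nat.one_le_iff_ne_zero.mpr hn
    linarith
  set c : Fin n × Fin n → ℝ :=
    fun p => if p.1 = p.2 then 2 / Real.sqrt (2 * n) else 0 with hc_def
  rw [goe, Measure.map_map (measurable_trFn n) (measurable_goeFn n)]
  have hcomp : (trFn n ∘ fun g : Fin n × Fin n → ℝ =>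
        Matrix.of fun i j => (g (i, j) + g (j, i)) / Real.sqrt (2 * n))
      = fun g => ∑ p, c p * g p := by
    ext g
    simp only [Function.comp_apply, trFn, Matrix.of_apply]
    rw [Fintype.sum_prod_type]
    refine Finset.sum_congr rfl fun i _ => ?_
    have : ∀ j, c (i, j) * g (i, j) = if i = j then 2 / Real.sqrt (2 * n) * g (i, j) else 0 := by
      intro j
      simp only [hc_def]
      split_ifs <;> simp
    rw [Finset.sum_congr rfl fun j _ => this j, Finset.sum_ite_eq Finset.univ i
      (fun j => 2 / Real.sqrt (2 * n) * g (i, j))]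
    simp only [Finset.mem_univ, if_true]
    ring
  rw [hcomp, stdGaussianPi_wsum]
  congr 1
  rw [← NNReal.coe_inj]
  erw [NNReal.coe_sum]
  push_cast
  change ∑ i, c i ^ 2 = 2
  have : ∀ p : Fin n × Fin n, (c p) ^ 2 = if p.1 = p.2 then (2 / Real.sqrt (2 * n)) ^ 2 else 0 := by
    intro p
    simp only [hc_def]
    split_ifs <;> simp
  rw [Finset.sum_congr rfl fun p _ => this p, Fintype.sum_prod_type]
  have hrow : ∀ i : Fin n, (∑ j, if i = j then (2 / Real.sqrt (2 * n)) ^ 2 else 0)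
      = (2 / Real.sqrt (2 * n)) ^ 2 := by
    intro i
    rw [Finset.sum_ite_eq Finset.univ i (fun _ => (2 / Real.sqrt (2 * n)) ^ 2)]
    simp
  rw [Finset.sum_congr rfl fun i _ => hrow i, Finset.sum_const, Finset.card_univ,
    Fintype.card_fin, nsmul_eq_mul]
  rw [div_pow, Real.sq_sqrt (by positivity)]
  have hn' : (n:ℝ) ≠ 0 := Nat.cast_ne_zero.mpr hn
  field_simp

lemma measurable_normalize (n : ℕ) :
    Measurable (fun v : EuclideanSpace ℝ (Fin n) => ‖v‖⁻¹ • v) :=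
  (measurable_norm.inv).smul measurable_id

lemma measurable_toEuclidean (n : ℕ) :
    Measurable (fun x : Fin n → ℝ =>
      ((EuclideanSpace.equiv (Fin n) ℝ).symm x : EuclideanSpace ℝ (Fin n))) :=
  (EuclideanSpace.equiv (Fin n) ℝ).symm.continuous.measurable

instance sphereUniform_prob (n : ℕ) : IsProbabilityMeasure (sphereUniform n) := by
  rw [sphereUniform]
  have : IsProbabilityMeasure ((stdGaussianPi (Fin n)).map
      fun x => ((EuclideanSpace.equiv (Fin n) ℝ).symm x : EuclideanSpace ℝ (Fin n))) :=
    Measure.isProbabilityMeasure_map (measurable_toEuclidean n).aemeasurable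
  exact Measure.isProbabilityMeasure_map (measurable_normalize n).aemeasurable

instance goe_prob (n : ℕ) : IsProbabilityMeasure (goe n) :=
  Measure.isProbabilityMeasure_map (measurable_goeFn n).aemeasurable

lemma measurable_spikedFn (n : ℕ) (β : ℝ) :
    Measurable (fun p : EuclideanSpace ℝ (Fin n) × Matrix (Fin n) (Fin n) ℝ =>
      Matrix.of fun i j => β * (p.1 i * p.1 j) + (p.2 : Matrix (Fin n) (Fin n) ℝ) i j) := by
  refine measurable_pi_lambda _ fun i => measurable_pi_lambda _ fun j => ?_
  have h1 : Measurable fun p : EuclideanSpace ℝ (Fin n) × Matrix (Fin n) (Fin n) ℝ => p.1 i :=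
    (measurable_euclid_apply n i).comp measurable_fst
  have h2 : Measurable fun p : EuclideanSpace ℝ (Fin n) × Matrix (Fin n) (Fin n) ℝ => p.1 j :=
    (measurable_euclid_apply n j).comp measurable_fst
  have h3 : Measurable fun p : EuclideanSpace ℝ (Fin n) × Matrix (Fin n) (Fin n) ℝ => p.2 i j :=
    (measurable_pi_apply j).comp ((measurable_pi_apply i).comp measurable_snd)
  exact ((h1.mul h2).const_mul β).add h3

instance spikedGOE_prob (n : ℕ) (β : ℝ) : IsProbabilityMeasure (spikedGOE n β) :=
  Measure.isProbabilityMeasure_map (measurable_spikedFn n β).aemeasurable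

lemma sphereUniform_sq_sum (n : ℕ) (hn : n ≠ 0) :
    ∀ᵐ v ∂(sphereUniform n), ∑ i, (v i) ^ 2 = 1 := by
  rw [sphereUniform]
  have hmeas_set : MeasurableSet {v : EuclideanSpace ℝ (Fin n) | ∑ i, (v i) ^ 2 = 1} := by
    have : Measurable fun v : EuclideanSpace ℝ (Fin n) => ∑ i, (v i) ^ 2 :=
      Finset.measurable_sum _ fun i _ => (measurable_euclid_apply n i).pow_const 2
    exact this (measurableSet_singleton 1)
  rw [ae_map_iff (measurable_normalize n).aemeasurable hmeas_set]
  have h0 : ∀ᵐ w ∂((stdGaussianPi (Fin n)).map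
      fun x => ((EuclideanSpace.equiv (Fin n) ℝ).symm x : EuclideanSpace ℝ (Fin n))),
      w ≠ 0 := by
    rw [ae_iff]
    simp only [ne_eq, not_not]
    have : {w : EuclideanSpace ℝ (Fin n) | w = 0} = {0} := by ext; simp
    rw [this, Measure.map_apply (measurable_toEuclidean n) (measurableSet_singleton 0)]
    set i₀ : Fin n := ⟨0, Nat.pos_of_ne_zero hn⟩
    have hsub : ((fun x : Fin n → ℝ =>
          ((EuclideanSpace.equiv (Fin n) ℝ).symm x : EuclideanSpace ℝ (Fin n))) ⁻¹'
            ({0} : Set (EuclideanSpace ℝ (Fin n))))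
        ⊆ Function.eval i₀ ⁻¹' ({0} : Set ℝ) := by
      intro x hx
      have h0' : ((EuclideanSpace.equiv (Fin n) ℝ).symm x : EuclideanSpace ℝ (Fin n)) = 0 := hx
      have hx0 : x = 0 := by
        funext i
        exact congrFun (congrArg (fun v : EuclideanSpace ℝ (Fin n) => (v : Fin n → ℝ)) h0') i
      simp [hx0, Function.eval]
    refine measure_mono_null hsub ?_
    rw [Set.eval_preimage]
    rw [stdGaussianPi, Measure.pi_pi]
    refine Finset.prod_eq_zero (Finset.mem_univ i₀) ?_
    simp only [Function.update_self]
    exact gaussianReal_absolutelyContinuous 0 one_ne_zero Real.volume_singleton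
  refine h0.mono fun w hw => ?_
  have hnorm : ‖w‖ ≠ 0 := norm_ne_zero_iff.mpr hw
  have hsum : ∑ i, (w i) ^ 2 = ‖w‖ ^ 2 := by
    rw [EuclideanSpace.norm_eq, Real.sq_sqrt (Finset.sum_nonneg fun i _ => sq_nonneg _)]
    refine Finset.sum_congr rfl fun i _ => ?_
    rw [Real.norm_eq_abs, sq_abs]
  simp only [Set.mem_setOf_eq, PiLp.smul_apply, smul_eq_mul]
  calc ∑ i, (‖w‖⁻¹ * w i) ^ 2 = ‖w‖⁻¹ ^ 2 * ∑ i, (w i) ^ 2 := by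
        rw [Finset.mul_sum]; exact Finset.sum_congr rfl fun i _ => by ring
    _ = 1 := by rw [hsum]; field_simp

lemma spiked_trace (n : ℕ) (hn : n ≠ 0) (β : ℝ) :
    (spikedGOE n β).map (trFn n) = gaussianReal β 2 := by
  rw [spikedGOE, Measure.map_map (measurable_trFn n) (measurable_spikedFn n β)]
  set Pm := (sphereUniform n).prod (goe n) with hPm
  have hfst : ∀ᵐ p ∂Pm, ∑ i, (p.1 i) ^ 2 = 1 := by
    have h := sphereUniform_sq_sum n hn
    rw [ae_iff] at h ⊢
    have hset : {p : EuclideanSpace ℝ (Fin n) × Matrix (Fin n) (Fin n) ℝ |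
        ¬ ∑ i, (p.1 i) ^ 2 = 1} = Prod.fst ⁻¹' {v | ¬ ∑ i, (v i) ^ 2 = 1} := rfl
    rw [hset, ← Measure.map_apply measurable_fst]
    · rw [hPm, Measure.map_fst_prod, measure_univ, one_smul]
      exact h
    · have : Measurable fun v : EuclideanSpace ℝ (Fin n) => ∑ i, (v i) ^ 2 :=
        Finset.measurable_sum _ fun i _ => (measurable_euclid_apply n i).pow_const 2
      exact (this (measurableSet_singleton 1)).compl
  have hae : ((trFn n) ∘ fun p : EuclideanSpace ℝ (Fin n) × Matrix (Fin n) (Fin n) ℝ =>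
        Matrix.of fun i j => β * (p.1 i * p.1 j) + (p.2 : Matrix (Fin n) (Fin n) ℝ) i j)
      =ᵐ[Pm] fun p => β + trFn n p.2 := by
    refine hfst.mono fun p hp => ?_
    simp only [Function.comp_apply, trFn, Matrix.of_apply]
    rw [Finset.sum_add_distrib]
    congr 1
    rw [← Finset.mul_sum]
    have : ∀ i : Fin n, p.1 i * p.1 i = (p.1 i) ^ 2 := fun i => (sq (p.1 i)).symm
    rw [Finset.sum_congr rfl fun i _ => this i, hp, mul_one]
  rw [Measure.map_congr hae]
  have hcomp : (fun p : EuclideanSpace ℝ (Fin n) × Matrix (Fin n) (Fin n) ℝ =>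
      β + trFn n p.2) = (fun z => β + z) ∘ (trFn n) ∘ Prod.snd := rfl
  rw [hcomp, ← Function.comp_assoc,
    ← Measure.map_map ((measurable_const_add β).comp (measurable_trFn n)) measurable_snd,
    hPm, Measure.map_snd_prod, measure_univ, one_smul,
    ← Measure.map_map (measurable_const_add β) (measurable_trFn n), goe_trace n hn,
    gaussianReal_map_const_add, zero_add]





section TV
variable {Ω : Type*} [MeasurableSpace Ω] (P Q : Measure Ω)
  [IsProbabilityMeasure P] [IsProbabilityMeasure Q]

lemma measure_toReal_le_one (s : Set Ω) : (P s).toReal ≤ 1 :=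
  le_trans (ENNReal.toReal_mono ENNReal.one_ne_top prob_le_one) (by simp)

lemma abs_le_tvDist {s : Set Ω} (hs : MeasurableSet s) :
    |(P s).toReal - (Q s).toReal| ≤ tvDist P Q := by
  have hbdd : BddAbove (Set.range fun t : {s : Set Ω // MeasurableSet s} =>
      |(P t.1).toReal - (Q t.1).toReal|) := by
    refine ⟨1, fun r hr => ?_⟩
    obtain ⟨t, rfl⟩ := hr
    refine abs_sub_le_iff.mpr ⟨?_, ?_⟩
    · have := measure_toReal_le_one P t.1
      have h2 : (0:ℝ) ≤ (Q t.1).toReal := ENNReal.toReal_nonneg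
      linarith
    · have := measure_toReal_le_one Q t.1
      have h2 : (0:ℝ) ≤ (P t.1).toReal := ENNReal.toReal_nonneg
      linarith
  exact le_ciSup hbdd (⟨s, hs⟩ : {s : Set Ω // MeasurableSet s})

lemma tvDist_le_one : tvDist P Q ≤ 1 := by
  have : Nonempty {s : Set Ω // MeasurableSet s} := ⟨⟨∅, MeasurableSet.empty⟩⟩
  refine ciSup_le fun t => abs_sub_le_iff.mpr ⟨?_, ?_⟩
  · have := measure_toReal_le_one P t.1
    have h2 : (0:ℝ) ≤ (Q t.1).toReal := ENNReal.toReal_nonneg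
    linarith
  · have := measure_toReal_le_one Q t.1
    have h2 : (0:ℝ) ≤ (P t.1).toReal := ENNReal.toReal_nonneg
    linarith

end TV

section CDF

lemma gaussianReal_two_eq : gaussianReal 0 2 = (gaussianReal 0 1).map (fun x => √2 * x) := by
  rw [gaussianReal_map_const_mul, mul_zero, mul_one]
  congr 1
  ext
  simp [Real.sq_sqrt two_pos.le]

lemma gaussianReal_two_Iic (t : ℝ) :
    gaussianReal 0 2 (Set.Iic t) = gaussianReal 0 1 (Set.Iic (t / √2)) := by
  rw [gaussianReal_two_eq, Measure.map_apply (measurable_const_mul _) measurableSet_Iic]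
  congr 1
  ext x
  simp only [Set.mem_preimage, Set.mem_Iic]
  rw [le_div_iff₀ (Real.sqrt_pos.mpr two_pos), mul_comm]

lemma gaussianReal_two_shift_Iic (β t : ℝ) :
    gaussianReal β 2 (Set.Iic t) = gaussianReal 0 1 (Set.Iic ((t - β) / √2)) := by
  have h : gaussianReal β 2 = (gaussianReal 0 2).map (fun x => x + β) := by
    rw [gaussianReal_map_add_const, zero_add]
  rw [h, Measure.map_apply (measurable_add_const _) measurableSet_Iic]
  have hpre : (fun x => x + β) ⁻¹' Set.Iic t = Set.Iic (t - β) := by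
    ext x
    simp [le_sub_iff_add_le]
  rw [hpre, gaussianReal_two_Iic]

lemma gaussianReal_symm_Iic (c : ℝ) :
    gaussianReal 0 1 (Set.Iic (-c)) = gaussianReal 0 1 (Set.Ici c) := by
  have h : (gaussianReal 0 1).map (fun x => (-1 : ℝ) * x) = gaussianReal 0 1 := by
    rw [gaussianReal_map_const_mul, mul_zero]
    congr 1
    ext
    simp
  conv_lhs => rw [← h]
  rw [Measure.map_apply (measurable_const_mul _) measurableSet_Iic]
  congr 1
  ext x
  simp only [Set.mem_preimage, Set.mem_Iic, Set.mem_Ici]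
  constructor <;> intro hx <;> nlinarith

lemma gaussianReal_singleton (c : ℝ) : gaussianReal 0 1 {c} = 0 :=
  gaussianReal_absolutelyContinuous 0 one_ne_zero Real.volume_singleton

lemma gaussianReal_Iic_add_Iic_neg (c : ℝ) :
    gaussianReal 0 1 (Set.Iic c) + gaussianReal 0 1 (Set.Iic (-c)) = 1 := by
  rw [gaussianReal_symm_Iic]
  have hIci : gaussianReal 0 1 (Set.Ici c) = gaussianReal 0 1 (Set.Ioi c) := by
    have h1 : Set.Ici c = {c} ∪ Set.Ioi c := by
      ext x
      simp [le_iff_lt_or_eq, or_comm, eq_comm]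
    rw [h1, measure_union (by simp [Set.disjoint_left]) measurableSet_Ioi,
      gaussianReal_singleton, zero_add]
  rw [hIci, ← Set.compl_Iic, measure_add_measure_compl measurableSet_Iic, measure_univ]

lemma gaussianReal_Iic_toReal (t : ℝ) :
    (gaussianReal 0 1 (Set.Iic t)).toReal
      = ∫ z in Set.Iic t, Real.exp (-z ^ 2 / 2) / Real.sqrt (2 * π) := by
  rw [gaussianReal_apply_eq_integral 0 one_ne_zero,
    ENNReal.toReal_ofReal (setIntegral_nonneg measurableSet_Iic
      fun x _ => gaussianPDFReal_nonneg 0 1 x)]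
  refine setIntegral_congr_fun measurableSet_Iic fun z _ => ?_
  simp only [gaussianPDFReal, NNReal.coe_one, mul_one, sub_zero]
  ring

end CDF


/-- for `k = 2` and `β > 0`,
`liminf ‖P_0 − P_β‖_TV ≥ 1 − 2Φ(−β/(2√2)) > 0`, where `Φ` is the standard Gaussian CDF. -/
theorem goe_tv_liminf_positive (β : ℝ) (hβ : 0 < β) :
    1 - 2 * (∫ z in Set.Iic (-(β / (2 * Real.sqrt 2))),
        Real.exp (-z ^ 2 / 2) / Real.sqrt (2 * Real.pi))
      ≤ liminf (fun n => tvDist (goe n) (spikedGOE n β)) atTop ∧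
    0 < 1 - 2 * (∫ z in Set.Iic (-(β / (2 * Real.sqrt 2))),
        Real.exp (-z ^ 2 / 2) / Real.sqrt (2 * Real.pi)) := by
  set c : ℝ := β / (2 * √2) with hc_def
  have hc : 0 < c := by
    have : (0:ℝ) < 2 * √2 := by positivity
    positivity
  set N := gaussianReal 0 1 with hN
  set A : ℝ := (N (Set.Iic c)).toReal with hA
  set B : ℝ := (N (Set.Iic (-c))).toReal with hB
  have hΦ : (∫ z in Set.Iic (-(β / (2 * Real.sqrt 2))),
      Real.exp (-z ^ 2 / 2) / Real.sqrt (2 * Real.pi)) = B := by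
    rw [hB, gaussianReal_Iic_toReal]
  have hsum : A + B = 1 := by
    have h := gaussianReal_Iic_add_Iic_neg c
    have h1 : N (Set.Iic c) ≠ ⊤ := measure_ne_top _ _
    have h2 : N (Set.Iic (-c)) ≠ ⊤ := measure_ne_top _ _
    rw [hA, hB, ← ENNReal.toReal_add h1 h2, h, ENNReal.toReal_one]
  have hBA : B < A := by
    have hunion : Set.Iic (-c) ∪ Set.Ioc (-c) c = Set.Iic c :=
      Set.Iic_union_Ioc_eq_Iic (by linarith)
    have hdisj : Disjoint (Set.Iic (-c)) (Set.Ioc (-c) c) := Set.Iic_disjoint_Ioc le_rfl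
    have hmeasu : N (Set.Iic c) = N (Set.Iic (-c)) + N (Set.Ioc (-c) c) := by
      rw [← hunion, measure_union hdisj measurableSet_Ioc]
    have hpos : N (Set.Ioc (-c) c) ≠ 0 := by
      intro h0
      have hv := gaussianReal_absolutelyContinuous' 0 one_ne_zero h0
      rw [Real.volume_Ioc, ENNReal.ofReal_eq_zero] at hv
      linarith
    have ht : 0 < (N (Set.Ioc (-c) c)).toReal :=
      ENNReal.toReal_pos hpos (measure_ne_top _ _)
    have : A = B + (N (Set.Ioc (-c) c)).toReal := by
      rw [hA, hB, hmeasu, ENNReal.toReal_add (measure_ne_top _ _) (measure_ne_top _ _)]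
    linarith
  rw [hΦ]
  have hD : 1 - 2 * B = A - B := by linarith
  constructor
  · rw [hD]
    refine le_liminf_of_le (isCoboundedUnder_ge_of_eventually_le atTop
      (Filter.Eventually.of_forall fun n => tvDist_le_one (goe n) (spikedGOE n β))) ?_
    rw [eventually_atTop]
    refine ⟨1, fun n hn => ?_⟩
    have hn0 : n ≠ 0 := by omega
    have hsmeas : MeasurableSet (trFn n ⁻¹' Set.Iic (β / 2)) :=
      measurable_trFn n measurableSet_Iic
    have hPval : goe n (trFn n ⁻¹' Set.Iic (β / 2)) = N (Set.Iic c) := by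
      rw [← Measure.map_apply (measurable_trFn n) measurableSet_Iic, goe_trace n hn0,
        gaussianReal_two_Iic, hc_def, div_div]
    have hQval : spikedGOE n β (trFn n ⁻¹' Set.Iic (β / 2)) = N (Set.Iic (-c)) := by
      rw [← Measure.map_apply (measurable_trFn n) measurableSet_Iic, spiked_trace n hn0,
        gaussianReal_two_shift_Iic]
      congr 2
      rw [hc_def]
      rw [show β / 2 - β = -(β / 2) by ring, neg_div, div_div]
    calc A - B ≤ |A - B| := le_abs_self _
      _ = |(goe n (trFn n ⁻¹' Set.Iic (β / 2))).toReal
            - (spikedGOE n β (trFn n ⁻¹' Set.Iic (β / 2))).toReal| := by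
          rw [hPval, hQval]
      _ ≤ tvDist (goe n) (spikedGOE n β) := abs_le_tvDist _ _ hsmeas
  · linarith


end
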